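/- arXiv:2007.10034 — 4 statements merged into one kernel-verified Lean document; each statement's English description precedes it below -/
import Mathlib

section
/- Let G be a group in which every cyclic subgroup is separable (this holds, in particular, whenever G is subgroup separable, i.e. every finitely generated subgroup of G is separable). Then G is balanced: for every element h of G of infinite order, every g in G, and all integers p and q, the relation g·h^p·g⁻¹ = h^q implies |p| = |q|. -/
/-- A subgroup `H` of `G` is separable if for every `g ∉ H` there is a homomorphism
`φ` from `G` to a finite group with `φ g ∉ φ(H)`. -/
def IsSeparableSubgroup {G : Type*} [Group G] (H : Subgroup G) : Prop :=
  ∀ g : G, g ∉ H → ∃ (Q : Type) (_ : Group Q) (_ : Finite Q) (φ : G →* Q),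
    φ g ∉ H.map φ

private lemma orderOf_conj_aux {Q : Type*} [Group Q] (b x : Q) :
    orderOf (b * x * b⁻¹) = orderOf x := by
  have := orderOf_injective (MulAut.conj b).toMonoidHom (MulEquiv.injective _) x
  simpa [MulAut.conj_apply] using this

private lemma orderOf_zpow_aux {Q : Type*} [Group Q] (a : Q) (p : ℤ) :
    orderOf (a ^ p) = orderOf (a ^ p.natAbs) := by
  rcases Int.natAbs_eq p with hp | hp
  · rw [show a ^ p = a ^ p.natAbs from by nth_rewrite 1 [hp]; rw [zpow_natCast]]
  · rw [show a ^ p = (a ^ p.natAbs)⁻¹ from by nth_rewrite 1 [hp]; rw [zpow_neg, zpow_natCast], orderOf_inv]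

private lemma key_aux {G : Type*} [Group G]
    (hsep : ∀ h : G, IsSeparableSubgroup (Subgroup.zpowers h))
    (h g : G) (hzero : ∀ m : ℤ, h ^ m = 1 → m = 0)
    (p q : ℤ) (hq : q ≠ 0) (hlt : |q| < |p|)
    (hrel : g * h ^ p * g⁻¹ = h ^ q) : False := by
  have hp0 : p ≠ 0 := by
    intro hp
    rw [hp, abs_zero] at hlt
    exact absurd hlt (abs_nonneg q).not_gt
  -- h^q is not in ⟨h^p⟩
  have hnot : h ^ q ∉ Subgroup.zpowers (h ^ p) := by
    rintro ⟨k, hk⟩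
    simp only at hk
    rw [← zpow_mul] at hk
    have h1 : h ^ (p * k - q) = 1 := by
      rw [zpow_sub, hk, mul_inv_cancel]
    have h2 : p * k = q := by have := hzero _ h1; omega
    rcases eq_or_ne k 0 with hk0 | hk0
    · rw [hk0, mul_zero] at h2; exact hq h2.symm
    · have : |p| ≤ |p * k| := by
        rw [abs_mul]
        nlinarith [abs_pos.mpr hk0, abs_nonneg p]
      rw [h2] at this
      omega
  obtain ⟨Q, _, _, φ, hφ⟩ := hsep (h ^ p) (h ^ q) hnot
  rw [MonoidHom.map_zpowers] at hφ
  set a := φ h with ha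
  have hmapp : φ (h ^ p) = a ^ p := map_zpow φ h p
  have hmapq : φ (h ^ q) = a ^ q := map_zpow φ h q
  rw [hmapp, hmapq] at hφ
  -- the relation in Q
  have hrel' : φ g * a ^ p * (φ g)⁻¹ = a ^ q := by
    have := congrArg φ hrel
    simpa [map_mul, map_inv, map_zpow] using this
  -- order computations
  set d := orderOf a with hdd
  have hd : 0 < d := orderOf_pos a
  have hord : orderOf (a ^ q) = orderOf (a ^ p) := by
    rw [← hrel', orderOf_conj_aux]
  have hpn : p.natAbs ≠ 0 := fun hh => hp0 (Int.natAbs_eq_zero.mp hh)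
  have hqn : q.natAbs ≠ 0 := fun hh => hq (Int.natAbs_eq_zero.mp hh)
  have hop : orderOf (a ^ p) = d / Nat.gcd d p.natAbs := by
    rw [orderOf_zpow_aux, orderOf_pow' a hpn]
  have hoq : orderOf (a ^ q) = d / Nat.gcd d q.natAbs := by
    rw [orderOf_zpow_aux, orderOf_pow' a hqn]
  have hgcd : Nat.gcd d p.natAbs = Nat.gcd d q.natAbs := by
    have h1 : d / Nat.gcd d p.natAbs = d / Nat.gcd d q.natAbs := by
      rw [← hop, ← hoq, hord]
    have h2 : Nat.gcd d p.natAbs ∣ d := Nat.gcd_dvd_left _ _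
    have h3 : Nat.gcd d q.natAbs ∣ d := Nat.gcd_dvd_left _ _
    calc Nat.gcd d p.natAbs = d / (d / Nat.gcd d p.natAbs) :=
          (Nat.div_div_self h2 hd.ne').symm
      _ = d / (d / Nat.gcd d q.natAbs) := by rw [h1]
      _ = Nat.gcd d q.natAbs := Nat.div_div_self h3 hd.ne'
  -- Bezout: construct k with (a^p)^k = a^q
  set e : ℤ := (Nat.gcd d p.natAbs : ℤ) with he
  have hedvdq : e ∣ q := by
    have h1 : Nat.gcd d q.natAbs ∣ q.natAbs := Nat.gcd_dvd_right _ _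
    have h2 : (Nat.gcd d q.natAbs : ℤ) ∣ (q.natAbs : ℤ) := Int.natCast_dvd_natCast.mpr h1
    have h3 : ((q.natAbs : ℤ)) ∣ q := Int.natAbs_dvd.mpr dvd_rfl
    rw [he, hgcd]
    exact h2.trans h3
  have hbez : e = (d : ℤ) * Int.gcdA (d : ℤ) p + p * Int.gcdB (d : ℤ) p := by
    have := Int.gcd_eq_gcd_ab (d : ℤ) p
    have hg : Int.gcd (d : ℤ) p = Nat.gcd d p.natAbs := by
      simp [Int.gcd]
    rw [hg] at this
    exact_mod_cast this
  set x := Int.gcdA (d : ℤ) p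
  set y := Int.gcdB (d : ℤ) p
  set k : ℤ := y * (q / e) with hk
  have hpk : p * k - q = -((d : ℤ) * (x * (q / e))) := by
    have hqe : e * (q / e) = q := Int.mul_ediv_cancel' hedvdq
    have : p * y = e - (d : ℤ) * x := by omega
    calc p * k - q = (p * y) * (q / e) - q := by ring
      _ = (e - (d : ℤ) * x) * (q / e) - q := by rw [this]
      _ = e * (q / e) - (d : ℤ) * (x * (q / e)) - q := by ring
      _ = -((d : ℤ) * (x * (q / e))) := by rw [hqe]; ring
  have hdvd : (d : ℤ) ∣ p * k - q := by rw [hpk]; exact ⟨-(x * (q / e)), by ring⟩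
  have h1 : a ^ (p * k - q) = 1 := orderOf_dvd_iff_zpow_eq_one.mp hdvd
  have hmem : a ^ q ∈ Subgroup.zpowers (a ^ p) := by
    refine ⟨k, ?_⟩
    simp only [← zpow_mul]
    rw [zpow_sub] at h1
    have := mul_inv_eq_one.mp h1
    exact this
  exact hφ hmem

/-- If every cyclic subgroup of `G` is separable, then `G` is balanced:
`g * h^p * g⁻¹ = h^q` for `h` of infinite order implies `|p| = |q|`. -/
theorem balanced_of_cyclic_subgroups_separable {G : Type*} [Group G]
    (hsep : ∀ h : G, IsSeparableSubgroup (Subgroup.zpowers h))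
    (h g : G) (hinf : ∀ n : ℕ, 0 < n → h ^ n ≠ 1)
    (p q : ℤ) (hrel : g * h ^ p * g⁻¹ = h ^ q) :
    |p| = |q| := by
  have hzero : ∀ m : ℤ, h ^ m = 1 → m = 0 := by
    intro m hm
    by_contra hm0
    have h1 : h ^ (m.natAbs : ℤ) = 1 := by
      rcases Int.natAbs_eq m with hn | hn
      · rw [← hn]; exact hm
      · rw [← neg_neg ((m.natAbs : ℤ)), ← hn, zpow_neg, hm, inv_one]
    rw [zpow_natCast] at h1
    exact hinf m.natAbs (Int.natAbs_pos.mpr hm0) h1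
  rcases eq_or_ne p 0 with hp | hp
  · subst hp
    have : h ^ q = 1 := by
      rw [← hrel]; simp
    have := hzero q this
    simp [this]
  rcases eq_or_ne q 0 with hq | hq
  · subst hq
    have : h ^ p = 1 := by
      have : g * h ^ p * g⁻¹ = 1 := by rw [hrel]; simp
      have h2 : h ^ p = g⁻¹ * 1 * g := by
        rw [← this]; group
      simpa using h2
    have := hzero p this
    simp [this]
  by_contra habs
  rcases lt_or_gt_of_ne (fun hh => habs hh) with hlt | hlt
  · -- |p| < |q| : use reversed relation
    have hrel' : g⁻¹ * h ^ q * g⁻¹⁻¹ = h ^ p := by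
      rw [inv_inv, ← hrel]; group
    exact key_aux hsep h g⁻¹ hzero q p hp hlt hrel'
  · exact key_aux hsep h g hzero p q hq hlt hrel
end

section
/- Let G be a group, let h be an element of G of infinite order, and let N be a positive integer such that the cyclic subgroup generated by h^N is separable in G. Then there exists a homomorphism ρ from G to a finite group such that the order of ρ(h) is a positive multiple of N. -/
/-- If `h` has infinite order and the cyclic subgroup `⟨h^N⟩` is separable in `G`
(`N > 0`), then there is a homomorphism `ρ` from `G` to a finite group such that
the order of `ρ h` is a positive multiple of `N`. -/
theorem exists_finite_quotient_order_isMultiple {G : Type*} [Group G]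
    (h : G) (hinf : ∀ n : ℕ, 0 < n → h ^ n ≠ 1)
    (N : ℕ) (hN : 0 < N)
    (hsep : IsSeparableSubgroup (Subgroup.zpowers (h ^ N))) :
    ∃ (Q : Type) (_ : Group Q) (_ : Finite Q) (ρ : G →* Q) (k : ℕ),
      0 < k ∧ orderOf (ρ h) = k * N := by
  have hno : ¬ IsOfFinOrder h := by
    rw [isOfFinOrder_iff_pow_eq_one]
    rintro ⟨n, hn, hn1⟩
    exact hinf n hn hn1
  have hzinj : Function.Injective fun n : ℤ => h ^ n :=
    injective_zpow_iff_not_isOfFinOrder.2 hno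
  have key : ∀ i : Fin N, ∃ (Q : Type) (_ : Group Q) (_ : Finite Q) (φ : G →* Q),
      0 < (i : ℕ) → φ h ^ (i : ℕ) ∉ (Subgroup.zpowers (h ^ N)).map φ := by
    intro i
    by_cases hi : 0 < (i : ℕ)
    · have hnot : h ^ (i : ℕ) ∉ Subgroup.zpowers (h ^ N) := by
        rintro ⟨k, hk⟩
        have hk' : h ^ ((N : ℤ) * k) = h ^ ((i : ℕ) : ℤ) := by
          rw [zpow_mul, zpow_natCast]
          simpa using hk
        have := hzinj hk'
        have hiN : (i : ℕ) < N := i.2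
        rcases le_or_gt k 0 with hk0 | hk0
        · have : (N : ℤ) * k ≤ 0 := mul_nonpos_of_nonneg_of_nonpos (by positivity) hk0
          omega
        · have : (N : ℤ) ≤ (N : ℤ) * k := le_mul_of_one_le_right (by positivity) hk0
          omega
      obtain ⟨Q, _, _, φ, hφ⟩ := hsep _ hnot
      exact ⟨Q, ‹_›, ‹_›, φ, fun _ => by simpa [map_pow] using hφ⟩
    · exact ⟨PUnit, inferInstance, inferInstance, 1, fun h' => absurd h' (by omega)⟩
  choose Q instG instF φ hφ using key
  letI : ∀ i, Group (Q i) := instG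
  letI : ∀ i, Finite (Q i) := instF
  set ρ : G →* (∀ i, Q i) := Pi.monoidHom φ with hρ
  have hM1 : ρ h ^ orderOf (ρ h) = 1 := pow_orderOf_eq_one (ρ h)
  set M := orderOf (ρ h) with hMdef
  have hMpos : 0 < M := orderOf_pos (ρ h)
  have hdvd : N ∣ M := by
    by_contra hnd
    have hr : M % N ≠ 0 := fun hr0 => hnd (Nat.dvd_of_mod_eq_zero hr0)
    set r := M % N with hrdef
    have hrlt : r < N := Nat.mod_lt _ hN
    have hrpos : 0 < r := Nat.pos_of_ne_zero hr
    set i : Fin N := ⟨r, hrlt⟩ with hidef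
    apply hφ i hrpos
    -- φ i h ^ r ∈ map
    set q := M / N with hqdef
    have hMeq : M = N * q + r := (Nat.div_add_mod M N).symm ▸ by omega
    have hcomp : φ i h ^ M = 1 := by
      have := congrFun hM1 i
      exact this
    refine ⟨(h ^ N) ^ (-(q : ℤ)), Subgroup.zpow_mem_zpowers _ _, ?_⟩
    have : φ i ((h ^ N) ^ (-(q : ℤ))) = (φ i h ^ N) ^ (-(q : ℤ)) := by
      rw [map_zpow, map_pow]
    rw [this]
    have h1 : (φ i h ^ N) ^ q * φ i h ^ r = 1 := by
      rw [← pow_mul, ← pow_add, ← hMeq, hcomp]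
    have h2 : φ i h ^ r = ((φ i h ^ N) ^ q)⁻¹ := by
      rw [eq_inv_iff_mul_eq_one] at *
      rw [← h1]; group
    rw [h2, zpow_neg, zpow_natCast]
  obtain ⟨k, hk⟩ := hdvd
  have hkpos : 0 < k := by
    rcases Nat.eq_zero_or_pos k with rfl | hkp
    · simp at hk; omega
    · exact hkp
  exact ⟨∀ i, Q i, inferInstance, inferInstance, ρ, k, hkpos,
    by rw [Nat.mul_comm]; exact hMdef.symm.trans hk⟩
end

section
/- Let G be a group, let I be a finite index set, and for each i ∈ I let D_i ≤ H_i be subgroups of G such that D_i has finite index in H_i and D_i is separable in G. Then G contains a finite-index normal subgroup N such that N ∩ H_i ≤ D_i for every i ∈ I; consequently, N ∩ gH_ig⁻¹ ≤ gD_ig⁻¹ for every i ∈ I and every g ∈ G. -/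
lemma aux_sep {G : Type*} [Group G] {D : Subgroup G} (hs : IsSeparableSubgroup D)
    {g : G} (hg : g ∉ D) :
    ∃ N : Subgroup G, N.Normal ∧ N.FiniteIndex ∧ ∀ d ∈ D, g * d ∉ N := by
  obtain ⟨Q, _, _, φ, hφ⟩ := hs g hg
  refine ⟨φ.ker, inferInstance, inferInstance, ?_⟩
  intro d hd hmem
  apply hφ
  have h1 : φ g * φ d = 1 := by rw [← map_mul]; exact hmem
  exact ⟨d⁻¹, D.inv_mem hd, by rw [map_inv]; exact (eq_inv_of_mul_eq_one_left h1).symm⟩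

/-- Given finitely many subgroups `D i ≤ H i` of `G` with `D i` of finite index in
`H i` and `D i` separable in `G`, there is a finite-index normal subgroup `N` of `G`
with `N ⊓ H i ≤ D i` for all `i`; consequently `N ⊓ g (H i) g⁻¹ ≤ g (D i) g⁻¹`
for all `i` and all `g ∈ G`. -/
theorem exists_finiteIndex_normal_subgroup_inf_le {G : Type*} [Group G]
    {I : Type*} [Finite I] (H D : I → Subgroup G) (hle : ∀ i, D i ≤ H i)
    (hfin : ∀ i, (D i).relIndex (H i) ≠ 0)
    (hsep : ∀ i, IsSeparableSubgroup (D i)) :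
    ∃ N : Subgroup G, N.Normal ∧ N.FiniteIndex ∧
      (∀ i, N ⊓ H i ≤ D i) ∧
      (∀ i, ∀ g : G, N ⊓ (H i).map (MulAut.conj g).toMonoidHom ≤
        (D i).map (MulAut.conj g).toMonoidHom) := by
  classical
  haveI hfinQ : ∀ i, Finite (H i ⧸ (D i).subgroupOf (H i)) := by
    intro i
    haveI : ((D i).subgroupOf (H i)).FiniteIndex := ⟨hfin i⟩
    infer_instance
  let S := Σ i : I, H i ⧸ (D i).subgroupOf (H i)
  haveI : Finite S := inferInstance
  let Ns : S → Subgroup G := fun s =>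
    if h : ((Quotient.out s.2 : H s.1) : G) ∈ D s.1 then ⊤
    else (aux_sep (hsep s.1) h).choose
  have hNorm : ∀ s, (Ns s).Normal := by
    intro s
    by_cases hc : ((Quotient.out s.2 : H s.1) : G) ∈ D s.1
    · simp only [Ns, dif_pos hc]; infer_instance
    · simp only [Ns, dif_neg hc]; exact (aux_sep (hsep _) hc).choose_spec.1
  have hFI : ∀ s, (Ns s).FiniteIndex := by
    intro s
    by_cases hc : ((Quotient.out s.2 : H s.1) : G) ∈ D s.1
    · simp only [Ns, dif_pos hc]; infer_instance
    · simp only [Ns, dif_neg hc]; exact (aux_sep (hsep _) hc).choose_spec.2.1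
  have hNorm' : (⨅ s, Ns s).Normal := by
    constructor
    intro n hn g
    rw [Subgroup.mem_iInf] at hn ⊢
    exact fun s => (hNorm s).conj_mem n (hn s) g
  have hmain : ∀ i, (⨅ s, Ns s) ⊓ H i ≤ D i := by
    intro i n hn
    obtain ⟨hnN, hnH⟩ := hn
    set q : H i ⧸ (D i).subgroupOf (H i) := QuotientGroup.mk ⟨n, hnH⟩ with hq
    have hrel : ((Quotient.out q : H i)⁻¹ * ⟨n, hnH⟩ : H i) ∈ (D i).subgroupOf (H i) := by
      rw [← QuotientGroup.eq]
      exact Quotient.out_eq q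
    have hd : (((Quotient.out q : H i) : G)⁻¹ * n) ∈ D i := hrel
    by_cases hD : ((Quotient.out q : H i) : G) ∈ D i
    · have : n = ((Quotient.out q : H i) : G) *
          (((Quotient.out q : H i) : G)⁻¹ * n) := by group
      rw [this]
      exact (D i).mul_mem hD hd
    · exfalso
      have hspec := (aux_sep (hsep i) hD).choose_spec.2.2
      have hNs : n ∈ Ns ⟨i, q⟩ := Subgroup.mem_iInf.mp hnN ⟨i, q⟩
      have hNsEq : Ns ⟨i, q⟩ = (aux_sep (hsep i) hD).choose := by
        simp only [Ns, dif_neg hD]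
      rw [hNsEq] at hNs
      exact hspec _ hd (by rwa [mul_inv_cancel_left])
  refine ⟨⨅ s, Ns s, hNorm', Subgroup.finiteIndex_iInf hFI, hmain, ?_⟩
  intro i g
  have hmapN : (⨅ s, Ns s).map (MulAut.conj g).toMonoidHom = ⨅ s, Ns s := by
    ext x
    simp only [Subgroup.mem_map, MulEquiv.coe_toMonoidHom, MulAut.conj_apply]
    constructor
    · rintro ⟨y, hy, rfl⟩; exact hNorm'.conj_mem y hy g
    · intro hx
      exact ⟨g⁻¹ * x * g, by simpa using hNorm'.conj_mem x hx g⁻¹, by group⟩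
  calc (⨅ s, Ns s) ⊓ (H i).map (MulAut.conj g).toMonoidHom
      = ((⨅ s, Ns s) ⊓ H i).map (MulAut.conj g).toMonoidHom := by
        conv_lhs => rw [← hmapN]
        rw [← Subgroup.map_inf _ _ _ (MulAut.conj g).injective]
    _ ≤ (D i).map (MulAut.conj g).toMonoidHom := Subgroup.map_mono (hmain i)
end

section
/- Let F be a free group, let π : F × ℤ → F denote the projection onto the first factor, and let H be a subgroup of F × ℤ. Then H is isomorphic, as a group, to the direct product of its image π(H) under the projection and its intersection H ∩ ({1} × ℤ) with the kernel of π. -/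
/-- If `F` is a free group, `π : F × ℤ → F` is the projection onto the first factor, and
`H ≤ F × ℤ`, then `H` is isomorphic to the direct product of its image `π(H)` with its
intersection `H ⊓ ({1} × ℤ)` with the kernel of `π`. -/
theorem subgroup_of_freeGroup_prod_int_iso {α : Type*}
    (H : Subgroup (FreeGroup α × Multiplicative ℤ)) :
    Nonempty
      (↥H ≃* ↥(H.map (MonoidHom.fst (FreeGroup α) (Multiplicative ℤ))) ×
        ↥(H ⊓ (MonoidHom.fst (FreeGroup α) (Multiplicative ℤ)).ker)) := by
  set f := MonoidHom.fst (FreeGroup α) (Multiplicative ℤ) with hf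
  -- the restriction of the projection to `H`, with codomain its image
  let φ : H →* ↥(H.map f) :=
    (f.domRestrict H).codRestrict _ (fun h => ⟨(h : _), h.2, rfl⟩)
  have hφ : ∀ h : H, (φ h : FreeGroup α) = ((h : FreeGroup α × Multiplicative ℤ)).1 :=
    fun h => rfl
  have hsurj : Function.Surjective φ := by
    rintro ⟨q, h, hh, rfl⟩
    exact ⟨⟨h, hh⟩, rfl⟩
  -- the image is a free group (Nielsen–Schreier), so `φ` admits a section
  let s : ↥(H.map f) →* H :=
    IsFreeGroup.lift (fun a => Function.surjInv hsurj (IsFreeGroup.of a))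
  have hs : ∀ q, φ (s q) = q := by
    have hc : φ.comp s = MonoidHom.id _ := by
      apply IsFreeGroup.ext_hom
      intro a
      simp [s, Function.surjInv_eq hsurj]
    intro q
    exact DFunLike.congr_fun hc q
  -- elements of the kernel part are central
  have central : ∀ x : H, (x : FreeGroup α × Multiplicative ℤ).1 = 1 →
      ∀ y : H, x * y = y * x := by
    intro x hx y
    ext : 1
    show (x : FreeGroup α × Multiplicative ℤ) * y = (y : _) * x
    apply Prod.ext
    · simp [hx]
    · exact mul_comm _ _
  let ι : ↥(H ⊓ f.ker) →* H := Subgroup.inclusion inf_le_left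
  have hιker : ∀ k : ↥(H ⊓ f.ker), ((ι k : H) : FreeGroup α × Multiplicative ℤ).1 = 1 :=
    fun k => k.2.2
  -- the multiplication map from the product
  let e : ↥(H.map f) × ↥(H ⊓ f.ker) →* H :=
  { toFun := fun p => s p.1 * ι p.2
    map_one' := by simp
    map_mul' := by
      rintro ⟨q1, k1⟩ ⟨q2, k2⟩
      simp only [Prod.fst_mul, Prod.snd_mul, map_mul]
      rw [mul_assoc, ← mul_assoc (s q2), ← central (ι k1) (hιker k1) (s q2),
        mul_assoc, ← mul_assoc, ← mul_assoc] }
  have hinj : Function.Injective e := by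
    rw [injective_iff_map_eq_one]
    rintro ⟨q, k⟩ h1
    have h1' : s q * ι k = 1 := h1
    have hφ1 : φ (s q) * φ (ι k) = 1 := by rw [← map_mul, h1', map_one]
    have hk1 : φ (ι k) = 1 := by
      apply Subtype.ext
      rw [hφ (ι k)]
      exact hιker k
    have hq : q = 1 := by rwa [hs q, hk1, mul_one] at hφ1
    have hk : ι k = 1 := by rwa [hq, map_one, one_mul] at h1'
    have hk' : k = 1 := Subgroup.inclusion_injective _ (by rw [map_one]; exact hk)
    rw [hq, hk']
    rfl
  have hsurjE : Function.Surjective e := by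
    intro h
    have hker : (((s (φ h))⁻¹ * h : H) : FreeGroup α × Multiplicative ℤ) ∈ H ⊓ f.ker := by
      refine ⟨((s (φ h))⁻¹ * h : H).2, ?_⟩
      show f (((s (φ h))⁻¹ * h : H) : FreeGroup α × Multiplicative ℤ) = 1
      have : (φ ((s (φ h))⁻¹ * h) : FreeGroup α) = 1 := by
        rw [map_mul, map_inv, hs]
        exact congrArg Subtype.val (inv_mul_cancel (φ h))
      exact this
    refine ⟨⟨φ h, ⟨_, hker⟩⟩, ?_⟩
    show s (φ h) * ι ⟨_, hker⟩ = h
    have : ι ⟨_, hker⟩ = (s (φ h))⁻¹ * h := rfl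
    rw [this, mul_inv_cancel_left]
  exact ⟨(MulEquiv.ofBijective e ⟨hinj, hsurjE⟩).symm⟩
end
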